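/- Suppose a genus-g parametrized tropical curve in ℝ^d is superabundant, witnessed by nonzero data λ^{(1)},…,λ^{(g)} ∈ ℝ^d with each segment j contained in an affine hyperplane with normal Σ_i η'_{i,j} λ^{(i)}. Let π be the orthogonal projection of ℝ^d onto the span V of {λ^{(1)},…,λ^{(g)}} (so dim V ≤ g). Then the projected curve π∘φ satisfies the same superabundancy condition: each projected segment is contained in the affine subspace of V orthogonal (within V) to Σ_i η'_{i,j} λ^{(i)}, translated by π(c_j). Hence the projected curve is superabundant in V ≅ ℝ^{g'} with g' ≤ g. -/

import Mathlib

open scoped RealInnerProductSpace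

/-- Suppose a genus-`g` tropical curve in `ℝ^d` is superabundant,
witnessed by data `λ⁽¹⁾, …, λ⁽ᵍ⁾` (not all zero) such that each segment `j` (a set of
points `S j`) lies in the affine hyperplane through `c j` with normal `∑ i, η' i j • λ⁽ⁱ⁾`.
Let `π` be the orthogonal projection onto `V = span{λ⁽¹⁾, …, λ⁽ᵍ⁾}`.  Then `dim V ≤ g`
and each projected segment lies in the affine subspace of `V` orthogonal (within `V`) to
`∑ i, η' i j • λ⁽ⁱ⁾`, translated by `π (c j)`; hence the projected curve is superabundant
in `V ≅ ℝ^{g'}` with `g' ≤ g`. -/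
theorem project_onto_obstruction
    (d g t : ℕ)
    (lam : Fin g → EuclideanSpace ℝ (Fin d))
    (hlam : lam ≠ 0)
    (η' : Fin g → Fin t → ℝ)
    (S : Fin t → Set (EuclideanSpace ℝ (Fin d)))
    (c : Fin t → EuclideanSpace ℝ (Fin d))
    (V : Submodule ℝ (EuclideanSpace ℝ (Fin d)))
    (hV : V = Submodule.span ℝ (Set.range lam))
    [V.HasOrthogonalProjection]
    (hseg : ∀ j, ∀ x ∈ S j, ⟪∑ i, η' i j • lam i, x - c j⟫ = 0) :
    Module.finrank ℝ V ≤ g ∧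
      ∀ j, ∀ x ∈ S j,
        ⟪∑ i, η' i j • lam i,
          ((V.orthogonalProjectionOnto x : EuclideanSpace ℝ (Fin d)) -
            (V.orthogonalProjectionOnto (c j) : EuclideanSpace ℝ (Fin d)))⟫ = 0 := by
  constructor
  · calc Module.finrank ℝ V = Module.finrank ℝ (Submodule.span ℝ (Set.range lam)) := by rw [hV]
      _ ≤ Fintype.card (Fin g) := finrank_range_le_card lam
      _ = g := Fintype.card_fin g
  · intro j x hx
    have hv : (∑ i, η' i j • lam i) ∈ V := by
      rw [hV]
      exact Submodule.sum_mem _ fun i _ =>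
        Submodule.smul_mem _ _ (Submodule.subset_span (Set.mem_range_self i))
    have h1 : ⟪∑ i, η' i j • lam i, x - (V.orthogonalProjectionOnto x : EuclideanSpace ℝ (Fin d))⟫ = 0 :=
      (Submodule.sub_starProjection_mem_orthogonal (K := V) x) _ hv
    have h2 : ⟪∑ i, η' i j • lam i, c j - (V.orthogonalProjectionOnto (c j) : EuclideanSpace ℝ (Fin d))⟫ = 0 :=
      (Submodule.sub_starProjection_mem_orthogonal (K := V) (c j)) _ hv
    have h3 := hseg j x hx
    have : ((V.orthogonalProjectionOnto x : EuclideanSpace ℝ (Fin d)) -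
        (V.orthogonalProjectionOnto (c j) : EuclideanSpace ℝ (Fin d))) =
        (x - c j) - (x - V.orthogonalProjectionOnto x) + (c j - V.orthogonalProjectionOnto (c j)) := by
      abel
    rw [this, inner_add_right, inner_sub_right, h1, h2, h3]
    ring
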